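/- Let p > 2 be a real number and let ℓ_p denote the real Banach space of sequences x = (x_n) with Σ|x_n|^p < ∞, equipped with the norm ‖x‖_p = (Σ|x_n|^p)^(1/p). Then for all κ, τ > 0, T₁(κ,τ,ℓ_p) = 2^(−1/p) · ((κ+τ)^p + |κ−τ|^p)^(1/p). -/

import Mathlib

open Real Set

namespace Stmt4Aux

/-! ### Elementary rpow lemmas -/

lemma rpow_mul_self {x : ℝ} (hx : 0 ≤ x) {q : ℝ} (hq : 0 < q) :
    x ^ q * x = x ^ (q + 1) := by
  rcases eq_or_lt_of_le hx with h | h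
  · rw [← h, Real.zero_rpow hq.ne', Real.zero_rpow (by positivity : (0:ℝ) < q+1).ne', zero_mul]
  · rw [Real.rpow_add_one h.ne']

lemma mean2 {a b z : ℝ} (ha : 0 ≤ a) (hb : 0 ≤ b) (hz : 1 ≤ z) :
    ((a + b) / 2) ^ z ≤ (a ^ z + b ^ z) / 2 := by
  have h := (convexOn_rpow hz).2 (Set.mem_Ici.2 ha) (Set.mem_Ici.2 hb)
    (by norm_num : (0:ℝ) ≤ 1/2) (by norm_num : (0:ℝ) ≤ 1/2) (by norm_num)
  simp only [smul_eq_mul] at h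
  calc ((a + b) / 2) ^ z = (1/2 * a + 1/2 * b) ^ z := by ring_nf
    _ ≤ 1/2 * a ^ z + 1/2 * b ^ z := h
    _ = (a ^ z + b ^ z) / 2 := by ring

lemma rpow_superadd {a b z : ℝ} (ha : 0 ≤ a) (hb : 0 ≤ b) (hz : 1 ≤ z) :
    a ^ z + b ^ z ≤ (a + b) ^ z := by
  have h := NNReal.add_rpow_le_rpow_add a.toNNReal b.toNNReal hz
  have h2 := NNReal.coe_le_coe.2 h
  rwa [NNReal.coe_add, NNReal.coe_rpow, NNReal.coe_rpow, NNReal.coe_rpow, NNReal.coe_add,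
    Real.coe_toNNReal a ha, Real.coe_toNNReal b hb] at h2

lemma sq_rpow (x : ℝ) (hx : 0 ≤ x) {p : ℝ} : x ^ p = (x ^ 2) ^ (p / 2) := by
  rw [← Real.rpow_natCast x 2, ← Real.rpow_mul hx, show ((2:ℕ):ℝ) * (p/2) = p by push_cast; ring]

/-! ### Scalar Clarkson inequality for `p ≥ 2` -/

lemma clarkson {p : ℝ} (hp : 2 ≤ p) {a b : ℝ} (ha : 0 ≤ a) (hb : 0 ≤ b) :
    (a + b) ^ p + |a - b| ^ p ≤ 2 ^ (p - 1) * (a ^ p + b ^ p) := by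
  have hp2 : 1 ≤ p / 2 := by linarith
  have hab : (0:ℝ) ≤ a ^ 2 + b ^ 2 := by positivity
  calc (a + b) ^ p + |a - b| ^ p
      = ((a + b) ^ 2) ^ (p/2) + (|a - b| ^ 2) ^ (p/2) := by
        rw [← sq_rpow _ (by positivity), ← sq_rpow _ (abs_nonneg _)]
    _ ≤ ((a + b) ^ 2 + |a - b| ^ 2) ^ (p/2) := rpow_superadd (by positivity) (by positivity) hp2
    _ = (2 * (a ^ 2 + b ^ 2)) ^ (p/2) := by rw [sq_abs]; congr 1; ring
    _ = 2 ^ (p/2) * (a ^ 2 + b ^ 2) ^ (p/2) := Real.mul_rpow (by norm_num) hab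
    _ = 2 ^ (p/2) * (2 * ((a ^ 2 + b ^ 2) / 2)) ^ (p/2) := by
        rw [mul_div_cancel₀ _ (by norm_num : (2:ℝ) ≠ 0)]
    _ = 2 ^ (p/2) * (2 ^ (p/2) * ((a ^ 2 + b ^ 2) / 2) ^ (p/2)) := by
        rw [Real.mul_rpow (by norm_num) (by positivity)]
    _ ≤ 2 ^ (p/2) * (2 ^ (p/2) * (((a ^ 2) ^ (p/2) + (b ^ 2) ^ (p/2)) / 2)) := by
        have h := mean2 (by positivity : (0:ℝ) ≤ a ^ 2) (by positivity : (0:ℝ) ≤ b ^ 2) hp2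
        have h2 : (0:ℝ) ≤ 2 ^ (p/2) := by positivity
        gcongr
    _ = 2 ^ (p - 1) * (a ^ p + b ^ p) := by
        rw [← sq_rpow a ha, ← sq_rpow b hb, ← mul_assoc, ← Real.rpow_add two_pos,
          show p/2 + p/2 = (p - 1) + 1 by ring, Real.rpow_add_one (by norm_num : (2:ℝ) ≠ 0)]
        ring

/-! ### The `{|a+b|, |a-b|}` multiset identity -/

lemma pair_eq {u v u' v' : ℝ} (hu : 0 ≤ u) (hv : 0 ≤ v) (hu' : 0 ≤ u') (hv' : 0 ≤ v')
    (hsq : u ^ 2 + v ^ 2 = u' ^ 2 + v' ^ 2) (hprod : u * v = u' * v') :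
    u = u' ∧ v = v' ∨ u = v' ∧ v = u' := by
  have hs : u + v = u' + v' := by
    nlinarith [sq_nonneg (u + v - u' - v'), sq_nonneg (u + v + u' + v')]
  have h : (u - u') * (u - v') = 0 := by linear_combination u * hs - hprod
  rcases mul_eq_zero.1 h with h | h
  · have h1 : u = u' := by linarith [sub_eq_zero.1 h]
    exact Or.inl ⟨h1, by linarith⟩
  · have h1 : u = v' := by linarith [sub_eq_zero.1 h]
    exact Or.inr ⟨h1, by linarith⟩

lemma abs_pair (a b z : ℝ) :
    |a + b| ^ z + |a - b| ^ z = (|a| + |b|) ^ z + |(|a| - |b|)| ^ z := by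
  have hsq : |a + b| ^ 2 + |a - b| ^ 2 = (|a| + |b|) ^ 2 + |(|a| - |b|)| ^ 2 := by
    rw [sq_abs, sq_abs, sq_abs]
    linear_combination (-2 : ℝ) * sq_abs a + (-2 : ℝ) * sq_abs b
  have hprod : |a + b| * |a - b| = (|a| + |b|) * |(|a| - |b|)| := by
    rw [← abs_mul, ← abs_of_nonneg (add_nonneg (abs_nonneg a) (abs_nonneg b)), ← abs_mul]
    have h : (a + b) * (a - b) = (|a| + |b|) * (|a| - |b|) := by
      linear_combination (-1 : ℝ) * sq_abs a + sq_abs b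
    rw [h]
  rcases pair_eq (abs_nonneg _) (abs_nonneg _)
      (add_nonneg (abs_nonneg a) (abs_nonneg b)) (abs_nonneg _) hsq hprod with ⟨h1, h2⟩ | ⟨h1, h2⟩
  · rw [h1, h2]
  · rw [h1, h2, add_comm]

/-! ### Derivative of the Hanner auxiliary function -/

lemma core_deriv {p : ℝ} (c : ℝ) {s : ℝ} (hs0 : 0 < s) (hs1 : s < 1) :
    HasDerivAt (fun s : ℝ => (1+s)^(p-1) + (1-s)^(p-1)
        + ((1+s)^(p-1) - (1-s)^(p-1)) * (c / s^(p-1)))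
      ((p-1) * ((1+s)^(p-2) - (1-s)^(p-2)) * (1 - c / s^p)) s := by
  have h1s : (0:ℝ) < 1 + s := by linarith
  have h2s : (0:ℝ) < 1 - s := by linarith
  have hA : HasDerivAt (fun s : ℝ => (1+s)^(p-1)) ((p-1) * (1+s)^(p-2)) s := by
    have h := (Real.hasDerivAt_rpow_const (x := 1 + s) (p := p - 1)
      (Or.inl h1s.ne')).comp s ((hasDerivAt_id s).const_add 1)
    simpa [Function.comp_def, show p - 1 - 1 = p - 2 by ring] using h
  have hB : HasDerivAt (fun s : ℝ => (1-s)^(p-1)) (-((p-1) * (1-s)^(p-2))) s := by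
    have h := (Real.hasDerivAt_rpow_const (x := 1 - s) (p := p - 1)
      (Or.inl h2s.ne')).comp s ((hasDerivAt_id s).const_sub 1)
    simpa [Function.comp_def, show p - 1 - 1 = p - 2 by ring] using h
  have hS : HasDerivAt (fun s : ℝ => s^(p-1)) ((p-1) * s^(p-2)) s := by
    have h := Real.hasDerivAt_rpow_const (x := s) (p := p - 1) (Or.inl hs0.ne')
    simpa [show p - 1 - 1 = p - 2 by ring] using h
  have hSne : s ^ (p-1) ≠ 0 := (Real.rpow_pos_of_pos hs0 _).ne'
  have hQ : HasDerivAt (fun s : ℝ => c / s^(p-1))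
      ((0 * s ^ (p-1) - c * ((p-1) * s^(p-2))) / (s ^ (p-1)) ^ 2) s :=
    (hasDerivAt_const s c).div hS hSne
  have hE := (hA.add hB).add ((hA.sub hB).mul hQ)
  refine hE.congr_deriv ?_
  simp only [Pi.sub_apply]
  have e1 : (1+s)^(p-1) = (1+s)^(p-2) * (1+s) := by
    rw [show p-1 = (p-2)+1 by ring, Real.rpow_add_one h1s.ne']
  have e2 : (1-s)^(p-1) = (1-s)^(p-2) * (1-s) := by
    rw [show p-1 = (p-2)+1 by ring, Real.rpow_add_one h2s.ne']
  have e3 : s^(p-1) = s^(p-2) * s := by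
    rw [show p-1 = (p-2)+1 by ring, Real.rpow_add_one hs0.ne']
  have e4 : s^p = s^(p-2) * s * s := by
    rw [← Real.rpow_add_one hs0.ne' (p-2), ← Real.rpow_add_one hs0.ne' (p-2+1)]
    congr 1
    ring
  have hw : (0:ℝ) < s^(p-2) := Real.rpow_pos_of_pos hs0 _
  rw [e1, e2, e3, e4]
  field_simp
  ring

/-! ### The core pointwise inequality of Hanner's proof -/

lemma core {p : ℝ} (hp : 2 ≤ p) {b : ℝ} (hb : 0 ≤ b) {r : ℝ} (hr0 : 0 < r) (hr1 : r ≤ 1) :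
    (1 + b) ^ p + |1 - b| ^ p ≤
      ((1 + r) ^ (p-1) + (1 - r) ^ (p-1)) +
        ((1 + r) ^ (p-1) - (1 - r) ^ (p-1)) * (b ^ p / r ^ (p-1)) := by
  have hp1 : (1:ℝ) ≤ p - 1 := by linarith
  have hp0 : (0:ℝ) < p := by linarith
  have hα2 : ∀ s : ℝ, 0 < s → s ≤ 1 → (2:ℝ) ≤ (1+s)^(p-1) + (1-s)^(p-1) := by
    intro s hs0 hs1
    have h := mean2 (a := 1+s) (b := 1-s) (by linarith) (by linarith) hp1
    rw [show (1+s+(1-s))/2 = 1 by ring, Real.one_rpow] at h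
    linarith
  rcases eq_or_lt_of_le hb with hb0 | hb0
  · rw [← hb0]
    rw [Real.zero_rpow hp0.ne', add_zero, sub_zero, abs_one, Real.one_rpow, zero_div, mul_zero,
      add_zero]
    linarith [hα2 r hr0 hr1]
  set c := b ^ p with hc
  set f : ℝ → ℝ := fun s => (1+s)^(p-1) + (1-s)^(p-1)
      + ((1+s)^(p-1) - (1-s)^(p-1)) * (c / s^(p-1)) with hf
  have hcont : ∀ {u v : ℝ}, 0 < u → ContinuousOn f (Icc u v) := by
    intro u v hu s hs
    have hs0 : 0 < s := lt_of_lt_of_le hu hs.1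
    apply ContinuousAt.continuousWithinAt
    have c_add : ContinuousAt (fun s : ℝ => (1+s)^(p-1)) s :=
      ContinuousAt.rpow_const ((continuous_const.add continuous_id).continuousAt)
        (Or.inr (by linarith))
    have c_sub : ContinuousAt (fun s : ℝ => (1-s)^(p-1)) s :=
      ContinuousAt.rpow_const ((continuous_const.sub continuous_id).continuousAt)
        (Or.inr (by linarith))
    have c_pow : ContinuousAt (fun s : ℝ => s^(p-1)) s :=
      ContinuousAt.rpow_const continuousAt_id (Or.inr (by linarith))
    exact (c_add.add c_sub).add ((c_add.sub c_sub).mul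
      (continuousAt_const.div c_pow (Real.rpow_pos_of_pos hs0 _).ne'))
  have key : ∀ u v : ℝ, 0 < u → u ≤ v → v ≤ 1 →
      (∀ s, s ∈ Ioo u v → 0 ≤ 1 - c / s ^ p) → f u ≤ f v := by
    intro u v hu huv hv1 hsign
    have hmono := monotoneOn_of_deriv_nonneg (convex_Icc u v) (hcont hu)
      (fun s hs => by
        rw [interior_Icc] at hs
        exact ((core_deriv c (hu.trans hs.1) (lt_of_lt_of_le hs.2 hv1)).differentiableAt
          ).differentiableWithinAt)
      (fun s hs => by
        rw [interior_Icc] at hs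
        have hs0 : 0 < s := hu.trans hs.1
        have hs1 : s < 1 := lt_of_lt_of_le hs.2 hv1
        rw [(core_deriv c hs0 hs1).deriv]
        have hmid : (0:ℝ) ≤ (1+s)^(p-2) - (1-s)^(p-2) := by
          have := Real.rpow_le_rpow (x := 1 - s) (y := 1 + s) (by linarith) (by linarith)
            (by linarith : (0:ℝ) ≤ p - 2)
          linarith
        exact mul_nonneg (mul_nonneg (by linarith) hmid) (hsign s hs))
    exact hmono (left_mem_Icc.2 huv) (right_mem_Icc.2 huv) huv
  have key' : ∀ u v : ℝ, 0 < u → u ≤ v → v ≤ 1 →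
      (∀ s, s ∈ Ioo u v → 1 - c / s ^ p ≤ 0) → f v ≤ f u := by
    intro u v hu huv hv1 hsign
    have hanti := antitoneOn_of_deriv_nonpos (convex_Icc u v) (hcont hu)
      (fun s hs => by
        rw [interior_Icc] at hs
        exact ((core_deriv c (hu.trans hs.1) (lt_of_lt_of_le hs.2 hv1)).differentiableAt
          ).differentiableWithinAt)
      (fun s hs => by
        rw [interior_Icc] at hs
        have hs0 : 0 < s := hu.trans hs.1
        have hs1 : s < 1 := lt_of_lt_of_le hs.2 hv1
        rw [(core_deriv c hs0 hs1).deriv]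
        have hmid : (0:ℝ) ≤ (1+s)^(p-2) - (1-s)^(p-2) := by
          have := Real.rpow_le_rpow (x := 1 - s) (y := 1 + s) (by linarith) (by linarith)
            (by linarith : (0:ℝ) ≤ p - 2)
          linarith
        exact mul_nonpos_of_nonneg_of_nonpos (mul_nonneg (by linarith) hmid) (hsign s hs))
    exact hanti (left_mem_Icc.2 huv) (right_mem_Icc.2 huv) huv
  show (1 + b) ^ p + |1 - b| ^ p ≤ f r
  rcases le_total b 1 with hble | hbge
  · have hfb : f b = (1 + b) ^ p + (1 - b) ^ p := by
      have hdiv : c / b ^ (p-1) = b := by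
        rw [hc, ← Real.rpow_sub hb0, show p - (p-1) = 1 by ring, Real.rpow_one]
      have e1 : (1+b)^(p-1) * (1+b) = (1+b)^p := by
        rw [rpow_mul_self (by linarith) (by linarith : (0:ℝ) < p - 1), show p-1+1 = p by ring]
      have e2 : (1-b)^(p-1) * (1-b) = (1-b)^p := by
        rw [rpow_mul_self (by linarith) (by linarith : (0:ℝ) < p - 1), show p-1+1 = p by ring]
      rw [hf]
      simp only
      rw [hdiv]
      linear_combination e1 + e2
    rw [abs_of_nonneg (by linarith : (0:ℝ) ≤ 1 - b), ← hfb]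
    rcases le_total r b with hrb | hbr
    · refine key' r b hr0 hrb hble fun s hs => ?_
      have hs0 : 0 < s := hr0.trans hs.1
      have hsb : s ^ p ≤ c := by
        rw [hc]
        exact Real.rpow_le_rpow hs0.le hs.2.le hp0.le
      have hsp : (0:ℝ) < s ^ p := Real.rpow_pos_of_pos hs0 _
      have h := (one_le_div hsp).2 hsb
      linarith
    · refine key b r hb0 hbr hr1 fun s hs => ?_
      have hs0 : 0 < s := hb0.trans hs.1
      have hsb : c ≤ s ^ p := by
        rw [hc]
        exact Real.rpow_le_rpow hb hs.1.le hp0.le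
      have hsp : (0:ℝ) < s ^ p := Real.rpow_pos_of_pos hs0 _
      have h := (div_le_one hsp).2 hsb
      linarith
  · have hf1 : f 1 = 2^(p-1) + 2^(p-1) * c := by
      rw [hf]
      simp only
      rw [show (1:ℝ) + 1 = 2 by norm_num, show (1:ℝ) - 1 = 0 by norm_num,
        Real.zero_rpow (by linarith : p - 1 ≠ 0), Real.one_rpow, div_one]
      ring
    have h1 : f 1 ≤ f r := by
      refine key' r 1 hr0 hr1 le_rfl fun s hs => ?_
      have hs0 : 0 < s := hr0.trans hs.1
      have hsb : s ^ p ≤ c := by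
        rw [hc]
        exact Real.rpow_le_rpow hs0.le (by linarith [hs.2] : s ≤ b) hp0.le
      have hsp : (0:ℝ) < s ^ p := Real.rpow_pos_of_pos hs0 _
      have h := (one_le_div hsp).2 hsb
      linarith
    have h2 : (1 + b) ^ p + |1 - b| ^ p ≤ 2^(p-1) + 2^(p-1) * c := by
      have h := clarkson hp (le_trans zero_le_one hbge) zero_le_one
      rw [Real.one_rpow] at h
      calc (1 + b) ^ p + |1 - b| ^ p = (b + 1) ^ p + |b - 1| ^ p := by
            rw [abs_sub_comm, add_comm 1 b]
        _ ≤ 2 ^ (p-1) * (b ^ p + 1) := h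
        _ = 2^(p-1) + 2^(p-1) * c := by rw [hc]; ring
    calc (1 + b) ^ p + |1 - b| ^ p ≤ 2^(p-1) + 2^(p-1) * c := h2
      _ = f 1 := hf1.symm
      _ ≤ f r := h1

/-! ### The weighted scalar inequality -/

lemma scalar_key {p : ℝ} (hp : 2 ≤ p) {F G : ℝ} (hG : 0 < G) (hFG : G ≤ F) (a b : ℝ) :
    |a + b| ^ p + |a - b| ^ p ≤
      (((F+G)^(p-1) + (F-G)^(p-1)) / F^(p-1)) * |a| ^ p +
      (((F+G)^(p-1) - (F-G)^(p-1)) / G^(p-1)) * |b| ^ p := by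
  have hF : 0 < F := hG.trans_le hFG
  have hp0 : (0:ℝ) < p := by linarith
  have hp1 : (1:ℝ) ≤ p - 1 := by linarith
  have hFq : (0:ℝ) < F ^ (p-1) := Real.rpow_pos_of_pos hF _
  have hGq : (0:ℝ) < G ^ (p-1) := Real.rpow_pos_of_pos hG _
  rw [abs_pair]
  have hA : (0:ℝ) ≤ |a| := abs_nonneg a
  have hB : (0:ℝ) ≤ |b| := abs_nonneg b
  rcases eq_or_lt_of_le hA with hA0 | hA0
  · rw [← hA0, zero_add, zero_sub, abs_neg, abs_of_nonneg hB,
      Real.zero_rpow hp0.ne', mul_zero, zero_add]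
    have h2 : 2 * G^(p-1) ≤ (F+G)^(p-1) - (F-G)^(p-1) := by
      have hsup := rpow_superadd (a := F - G) (b := 2*G) (by linarith) (by linarith) hp1
      rw [show F - G + 2*G = F + G by ring] at hsup
      have h2G : (2*G)^(p-1) = 2^(p-1) * G^(p-1) := Real.mul_rpow (by norm_num) hG.le
      have h22 : (2:ℝ) ≤ 2^(p-1) := by
        nth_rewrite 1 [show (2:ℝ) = 2^(1:ℝ) by rw [Real.rpow_one]]
        exact Real.rpow_le_rpow_of_exponent_le one_le_two hp1
      nlinarith [hGq]
    have hcoef : (2:ℝ) ≤ ((F+G)^(p-1) - (F-G)^(p-1)) / G^(p-1) := by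
      rw [le_div_iff₀ hGq]
      linarith
    have hBp : (0:ℝ) ≤ |b| ^ p := Real.rpow_nonneg hB _
    nlinarith [mul_le_mul_of_nonneg_right hcoef hBp]
  · have hcore := core hp (b := |b| / |a|) (by positivity)
      (r := G/F) (by positivity) ((div_le_one hF).2 hFG)
    have hApos : (0:ℝ) ≤ |a| ^ p := Real.rpow_nonneg hA _
    have h := mul_le_mul_of_nonneg_right hcore hApos
    have eA : (1 + |b|/|a|) ^ p * |a| ^ p = (|a| + |b|) ^ p := by
      rw [← Real.mul_rpow (by positivity) hA]
      congr 1
      field_simp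
    have eB : abs (1 - |b|/|a|) ^ p * |a| ^ p = abs (|a| - |b|) ^ p := by
      rw [← Real.mul_rpow (abs_nonneg _) hA]
      congr 1
      rw [← abs_of_pos hA0, ← abs_mul, abs_of_pos hA0]
      congr 1
      field_simp
    calc (|a| + |b|) ^ p + abs (|a| - |b|) ^ p
        = ((1 + |b|/|a|) ^ p + abs (1 - |b|/|a|) ^ p) * |a| ^ p := by
          rw [add_mul, eA, eB]
      _ ≤ (((1 + G/F) ^ (p-1) + (1 - G/F) ^ (p-1)) +
            ((1 + G/F) ^ (p-1) - (1 - G/F) ^ (p-1)) *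
              ((|b|/|a|) ^ p / (G/F) ^ (p-1))) * |a| ^ p := h
      _ = (((F+G)^(p-1) + (F-G)^(p-1)) / F^(p-1)) * |a| ^ p +
          (((F+G)^(p-1) - (F-G)^(p-1)) / G^(p-1)) * |b| ^ p := by
          rw [show (1:ℝ) + G/F = (F+G)/F by field_simp,
            show (1:ℝ) - G/F = (F-G)/F by field_simp,
            Real.div_rpow (by linarith : (0:ℝ) ≤ F+G) hF.le,
            Real.div_rpow (by linarith : (0:ℝ) ≤ F-G) hF.le,
            Real.div_rpow hB hA, Real.div_rpow hG.le hF.le]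
          field_simp

/-! ### Hanner's inequality in `ℓ_p`, `p ≥ 2` -/

lemma hanner {p : ℝ} (hp : 2 ≤ p) [Fact (1 ≤ ENNReal.ofReal p)]
    (f g : lp (fun _ : ℕ => ℝ) (ENNReal.ofReal p)) (hg : 0 < ‖g‖) (hfg : ‖g‖ ≤ ‖f‖) :
    ‖f + g‖ ^ p + ‖f - g‖ ^ p ≤ (‖f‖ + ‖g‖) ^ p + (‖f‖ - ‖g‖) ^ p := by
  have hp0 : (0:ℝ) < p := by linarith
  have hq : (ENNReal.ofReal p).toReal = p := ENNReal.toReal_ofReal hp0.le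
  have hqpos : 0 < (ENNReal.ofReal p).toReal := by rw [hq]; exact hp0
  set F := ‖f‖ with hFdef
  set G := ‖g‖ with hGdef
  have hF : 0 < F := lt_of_lt_of_le hg hfg
  set Cα := ((F+G)^(p-1) + (F-G)^(p-1)) / F^(p-1) with hCα
  set Cβ := ((F+G)^(p-1) - (F-G)^(p-1)) / G^(p-1) with hCβ
  have Sf : Summable (fun n => ‖f n‖ ^ p) := by
    have := (lp.memℓp f).summable hqpos
    rwa [hq] at this
  have Sg : Summable (fun n => ‖g n‖ ^ p) := by
    have := (lp.memℓp g).summable hqpos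
    rwa [hq] at this
  have Sfg : Summable (fun n => ‖(f + g) n‖ ^ p) := by
    have := (lp.memℓp (f + g)).summable hqpos
    rwa [hq] at this
  have Sfg' : Summable (fun n => ‖(f - g) n‖ ^ p) := by
    have := (lp.memℓp (f - g)).summable hqpos
    rwa [hq] at this
  have hpt : ∀ n : ℕ, ‖(f + g) n‖ ^ p + ‖(f - g) n‖ ^ p ≤ Cα * ‖f n‖ ^ p + Cβ * ‖g n‖ ^ p := by
    intro n
    have h := scalar_key hp hg hfg (f n) (g n)
    simpa only [lp.coeFn_add, lp.coeFn_sub, Pi.add_apply, Pi.sub_apply,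
      Real.norm_eq_abs] using h
  have key : ‖f + g‖ ^ p + ‖f - g‖ ^ p ≤ Cα * F ^ p + Cβ * G ^ p := by
    have h1 := lp.norm_rpow_eq_tsum hqpos (f + g)
    have h2 := lp.norm_rpow_eq_tsum hqpos (f - g)
    have h3 := lp.norm_rpow_eq_tsum hqpos f
    have h4 := lp.norm_rpow_eq_tsum hqpos g
    rw [hq] at h1 h2 h3 h4
    rw [h1, h2, h3, h4, ← Summable.tsum_add Sfg Sfg', ← tsum_mul_left, ← tsum_mul_left,
      ← Summable.tsum_add (Sf.mul_left Cα) (Sg.mul_left Cβ)]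
    exact Summable.tsum_le_tsum hpt (Sfg.add Sfg') ((Sf.mul_left Cα).add (Sg.mul_left Cβ))
  have hFq : (0:ℝ) < F ^ (p-1) := Real.rpow_pos_of_pos hF _
  have hGq : (0:ℝ) < G ^ (p-1) := Real.rpow_pos_of_pos hg _
  have e1 : Cα * F ^ p = ((F+G)^(p-1) + (F-G)^(p-1)) * F := by
    rw [hCα, show F ^ p = F ^ (p-1) * F by
      rw [rpow_mul_self hF.le (by linarith : (0:ℝ) < p - 1), show p-1+1 = p by ring]]
    field_simp
  have e2 : Cβ * G ^ p = ((F+G)^(p-1) - (F-G)^(p-1)) * G := by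
    rw [hCβ, show G ^ p = G ^ (p-1) * G by
      rw [rpow_mul_self hg.le (by linarith : (0:ℝ) < p - 1), show p-1+1 = p by ring]]
    field_simp
  have u1 : (F+G)^(p-1) * (F+G) = (F+G)^p := by
    rw [rpow_mul_self (by linarith) (by linarith : (0:ℝ) < p - 1), show p-1+1 = p by ring]
  have u2 : (F-G)^(p-1) * (F-G) = (F-G)^p := by
    rw [rpow_mul_self (by linarith) (by linarith : (0:ℝ) < p - 1), show p-1+1 = p by ring]
  have e3 : Cα * F ^ p + Cβ * G ^ p = (F+G)^p + (F-G)^p := by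
    rw [e1, e2]
    linear_combination u1 + u2
  linarith [key, e3.le, e3.ge]

/-! ### AM-GM type estimate -/

lemma sqrt_le_rpow_mean {p a b : ℝ} (hp : 1 ≤ p) (ha : 0 ≤ a) (hb : 0 ≤ b) :
    Real.sqrt (a * b) ≤ ((a ^ p + b ^ p) / 2) ^ (1 / p) := by
  have hp0 : (0:ℝ) < p := lt_of_lt_of_le one_pos hp
  have h1 : Real.sqrt (a * b) ≤ (a + b) / 2 := by
    rw [show (a+b)/2 = Real.sqrt (((a+b)/2)^2) from (Real.sqrt_sq (by positivity)).symm]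
    exact Real.sqrt_le_sqrt (by nlinarith [sq_nonneg (a - b)])
  have h2 : ((a + b)/2) ^ p ≤ (a ^ p + b ^ p)/2 := mean2 ha hb hp
  calc Real.sqrt (a * b) ≤ (a + b) / 2 := h1
    _ = (((a + b)/2) ^ p) ^ (1/p) := by
        rw [← Real.rpow_mul (by positivity), mul_one_div, div_self hp0.ne', Real.rpow_one]
    _ ≤ ((a ^ p + b ^ p)/2) ^ (1/p) :=
        Real.rpow_le_rpow (by positivity) h2 (by positivity)

/-! ### Two-coordinate elements of `ℓ_p` -/

variable {p : ℝ} [Fact (1 ≤ ENNReal.ofReal p)]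

/-- the element of `ℓ_p` with coordinates `u, v, 0, 0, ...` -/
noncomputable def e (p : ℝ) [Fact (1 ≤ ENNReal.ofReal p)] (u v : ℝ) :
    lp (fun _ : ℕ => ℝ) (ENNReal.ofReal p) :=
  lp.single (ENNReal.ofReal p) 0 u + lp.single (ENNReal.ofReal p) 1 v

omit [Fact (1 ≤ ENNReal.ofReal p)] in
lemma single_add (i : ℕ) (u v : ℝ) :
    lp.single (E := fun _ : ℕ => ℝ) (ENNReal.ofReal p) i (u + v) =
      lp.single (ENNReal.ofReal p) i u + lp.single (ENNReal.ofReal p) i v := by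
  refine lp.ext (funext fun j => ?_)
  rcases eq_or_ne j i with h | h
  · subst h
    simp [lp.coeFn_add, lp.single_apply_self]
  · simp [lp.coeFn_add, lp.single_apply_ne _ _ _ h]

lemma e_smul (c u v : ℝ) : c • e p u v = e p (c * u) (c * v) := by
  rw [e, e, smul_add, ← smul_eq_mul, ← smul_eq_mul, lp.single_smul, lp.single_smul]

lemma e_add (u v u' v' : ℝ) : e p u v + e p u' v' = e p (u + u') (v + v') := by
  rw [e, e, e, single_add, single_add]
  abel

lemma e_sub (u v u' v' : ℝ) : e p u v - e p u' v' = e p (u - u') (v - v') := by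
  rw [sub_eq_add_neg, ← neg_one_smul ℝ (e p u' v'), e_smul, neg_one_mul, neg_one_mul, e_add,
    ← sub_eq_add_neg, ← sub_eq_add_neg]

lemma e_norm (hp : 0 < p) (u v : ℝ) : ‖e p u v‖ ^ p = |u| ^ p + |v| ^ p := by
  have hq : (ENNReal.ofReal p).toReal = p := ENNReal.toReal_ofReal hp.le
  have hqpos : 0 < (ENNReal.ofReal p).toReal := by rw [hq]; exact hp
  have h := lp.norm_sum_single (E := fun _ : ℕ => ℝ) hqpos
    (fun n : ℕ => if n = 0 then u else v) ({0, 1} : Finset ℕ)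
  rw [Finset.sum_pair (by norm_num : (0:ℕ) ≠ 1), Finset.sum_pair (by norm_num : (0:ℕ) ≠ 1)] at h
  norm_num at h
  rw [hq] at h
  rw [e, h]

end Stmt4Aux

open Stmt4Aux

/-- The constant `T₁(κ,τ,X) = sup{ (‖κx + τy‖ ‖κx − τy‖)^{1/2} : x, y ∈ S(X) }`. -/
noncomputable def T1 (X : Type*) [NormedAddCommGroup X] (κ τ : ℝ) [Module ℝ X] : ℝ :=
  sSup {r : ℝ | ∃ x y : X, ‖x‖ = 1 ∧ ‖y‖ = 1 ∧
    r = Real.sqrt (‖κ • x + τ • y‖ * ‖κ • x - τ • y‖)}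

/-- For real `p > 2` and the sequence space `ℓ_p`, for all `κ, τ > 0`,
`T₁(κ,τ,ℓ_p) = 2^(−1/p) ((κ+τ)^p + |κ−τ|^p)^(1/p)`. -/
theorem stmt4 (p : ℝ) (hp : 2 < p) [Fact (1 ≤ ENNReal.ofReal p)]
    (κ τ : ℝ) (hκ : 0 < κ) (hτ : 0 < τ) :
    T1 (lp (fun _ : ℕ => ℝ) (ENNReal.ofReal p)) κ τ =
      (2 : ℝ) ^ (-(1 / p)) * ((κ + τ) ^ p + |κ - τ| ^ p) ^ (1 / p) := by
  have hp0 : (0:ℝ) < p := by linarith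
  have hp1 : (1:ℝ) ≤ p := by linarith
  set S := (κ + τ) ^ p + |κ - τ| ^ p with hS
  have hSpos : 0 < S := by
    have : (0:ℝ) < (κ + τ) ^ p := Real.rpow_pos_of_pos (by linarith) _
    have h2 : (0:ℝ) ≤ |κ - τ| ^ p := Real.rpow_nonneg (abs_nonneg _) _
    rw [hS]; linarith
  set V := (2 : ℝ) ^ (-(1 / p)) * S ^ (1 / p) with hV
  have hVpos : 0 < V := by
    rw [hV]; positivity
  have hVp : V ^ p = S / 2 := by
    rw [hV, Real.mul_rpow (by positivity) (by positivity),
      ← Real.rpow_mul (by norm_num : (0:ℝ) ≤ 2), ← Real.rpow_mul hSpos.le,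
      show -(1/p) * p = -1 by field_simp, show 1/p * p = 1 by field_simp,
      Real.rpow_neg_one, Real.rpow_one]
    ring
  -- helper for deducing norm equalities from rpow equalities
  have norm_eq : ∀ X W : ℝ, 0 ≤ X → 0 ≤ W → X ^ p = W ^ p → X = W := by
    intro X W hX hW h
    exact Real.rpow_left_injOn hp0.ne' hX hW h
  -- the extremal vectors
  set c := (2 : ℝ) ^ (-(1 / p)) with hc
  have hcpos : 0 < c := by rw [hc]; positivity
  have hcp : c ^ p = 1 / 2 := by
    rw [hc, ← Real.rpow_mul (by norm_num : (0:ℝ) ≤ 2),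
      show -(1/p) * p = -1 by field_simp]
    norm_num [Real.rpow_neg_one]
  set x₀ := e p c c with hx₀
  set y₀ := e p c (-c) with hy₀
  have hx₀n : ‖x₀‖ = 1 := by
    apply norm_eq _ _ (norm_nonneg _) zero_le_one
    rw [hx₀, e_norm hp0, Real.one_rpow, abs_of_pos hcpos, hcp]
    norm_num
  have hy₀n : ‖y₀‖ = 1 := by
    apply norm_eq _ _ (norm_nonneg _) zero_le_one
    rw [hy₀, e_norm hp0, Real.one_rpow, abs_neg, abs_of_pos hcpos, hcp]
    norm_num
  have hu₀ : κ • x₀ + τ • y₀ = e p ((κ + τ) * c) ((κ - τ) * c) := by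
    rw [hx₀, hy₀, e_smul, e_smul, e_add]
    congr 1 <;> ring
  have hv₀ : κ • x₀ - τ • y₀ = e p ((κ - τ) * c) ((κ + τ) * c) := by
    rw [hx₀, hy₀, e_smul, e_smul, e_sub]
    congr 1 <;> ring
  have habs : ∀ u v : ℝ, ‖e p (u * c) (v * c)‖ ^ p = (|u| ^ p + |v| ^ p) * c ^ p := by
    intro u v
    rw [e_norm hp0, abs_mul, abs_mul, abs_of_pos hcpos,
      Real.mul_rpow (abs_nonneg _) hcpos.le, Real.mul_rpow (abs_nonneg _) hcpos.le]
    ring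
  have hu₀n : ‖κ • x₀ + τ • y₀‖ = V := by
    apply norm_eq _ _ (norm_nonneg _) hVpos.le
    rw [hu₀, habs, hVp, hcp, abs_of_pos (by linarith : (0:ℝ) < κ + τ), hS]
    ring
  have hv₀n : ‖κ • x₀ - τ • y₀‖ = V := by
    apply norm_eq _ _ (norm_nonneg _) hVpos.le
    rw [hv₀, habs, hVp, hcp, abs_of_pos (by linarith : (0:ℝ) < κ + τ), hS]
    ring
  -- the sup computation
  have hgreat : IsGreatest {r : ℝ | ∃ x y : lp (fun _ : ℕ => ℝ) (ENNReal.ofReal p),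
      ‖x‖ = 1 ∧ ‖y‖ = 1 ∧ r = Real.sqrt (‖κ • x + τ • y‖ * ‖κ • x - τ • y‖)} V := by
    constructor
    · exact ⟨x₀, y₀, hx₀n, hy₀n, by rw [hu₀n, hv₀n, Real.sqrt_mul_self hVpos.le]⟩
    · rintro r ⟨x, y, hx, hy, rfl⟩
      have hκx : ‖κ • x‖ = κ := by
        rw [norm_smul, hx, Real.norm_eq_abs, abs_of_pos hκ, mul_one]
      have hτy : ‖τ • y‖ = τ := by
        rw [norm_smul, hy, Real.norm_eq_abs, abs_of_pos hτ, mul_one]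
      have hH : ‖κ • x + τ • y‖ ^ p + ‖κ • x - τ • y‖ ^ p ≤ S := by
        rcases le_total τ κ with h | h
        · have hh := hanner hp.le (κ • x) (τ • y) (by rw [hτy]; exact hτ)
            (by rw [hκx, hτy]; exact h)
          rw [hκx, hτy] at hh
          rw [hS, abs_of_nonneg (by linarith : (0:ℝ) ≤ κ - τ)]
          exact hh
        · have hh := hanner hp.le (τ • y) (κ • x) (by rw [hκx]; exact hκ)
            (by rw [hκx, hτy]; exact h)
          rw [hκx, hτy, add_comm (τ • y) (κ • x), norm_sub_rev (τ • y) (κ • x)] at hh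
          rw [hS, abs_sub_comm, abs_of_nonneg (by linarith : (0:ℝ) ≤ τ - κ), add_comm κ τ]
          exact hh
      calc Real.sqrt (‖κ • x + τ • y‖ * ‖κ • x - τ • y‖)
          ≤ ((‖κ • x + τ • y‖ ^ p + ‖κ • x - τ • y‖ ^ p) / 2) ^ (1/p) :=
            sqrt_le_rpow_mean hp1 (norm_nonneg _) (norm_nonneg _)
        _ ≤ (S / 2) ^ (1/p) := by
            apply Real.rpow_le_rpow (by positivity) _ (by positivity)
            linarith [hH]
        _ = V := by
            rw [hV, hc, Real.div_rpow hSpos.le (by norm_num : (0:ℝ) ≤ 2),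
              Real.rpow_neg (by norm_num : (0:ℝ) ≤ 2), div_eq_mul_inv, mul_comm]
  unfold T1
  exact hgreat.csSup_eq
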